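/- Contractibility of the fibers of the spectral projection map: Let N ≥ 1 and let P₀ ∈ M(N,ℂ) be an idempotent matrix (P₀² = P₀). Then the set F := {a ∈ M(N,iℝ) : E₊(a) = range(P₀) and E₋(a) = ker(P₀)}, equipped with the subspace topology from M(N,ℂ), is nonempty and contractible. -/

import Mathlib

open Module

/-- `E₊(a)`: the sum of the generalized eigenspaces of `a` for eigenvalues with positive
real part. -/
noncomputable def Eplus (N : ℕ) (a : Matrix (Fin N) (Fin N) ℂ) : Submodule ℂ (Fin N → ℂ) :=
  ⨆ μ ∈ {μ : ℂ | 0 < μ.re}, Module.End.maxGenEigenspace (Matrix.toLin' a) μ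

/-- `E₋(a)`: the sum of the generalized eigenspaces of `a` for eigenvalues with negative
real part. -/
noncomputable def Eminus (N : ℕ) (a : Matrix (Fin N) (Fin N) ℂ) : Submodule ℂ (Fin N → ℂ) :=
  ⨆ μ ∈ {μ : ℂ | μ.re < 0}, Module.End.maxGenEigenspace (Matrix.toLin' a) μ

/-- The fiber of the spectral projection map over the idempotent `P₀`: all hyperbolic
matrices `a` with `E₊(a) = range P₀` and `E₋(a) = ker P₀`. -/
def projFiber (N : ℕ) (P₀ : Matrix (Fin N) (Fin N) ℂ) : Set (Matrix (Fin N) (Fin N) ℂ) :=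
  {a | (∀ μ ∈ spectrum ℂ a, μ.re ≠ 0) ∧
    Eplus N a = LinearMap.range (Matrix.toLin' P₀) ∧
    Eminus N a = LinearMap.ker (Matrix.toLin' P₀)}

namespace ProjFiberAux

variable {N : ℕ}

/-- `f` is block diagonal w.r.t. `range p ⊕ ker p` with spectra in the open right/left
half planes. -/
def Good (p f : Module.End ℂ (Fin N → ℂ)) : Prop :=
  (∀ x ∈ LinearMap.range p, f x ∈ LinearMap.range p) ∧
  (∀ x ∈ LinearMap.ker p, f x ∈ LinearMap.ker p) ∧
  (∀ (μ : ℂ) (v : Fin N → ℂ), v ∈ LinearMap.range p → v ≠ 0 → f v = μ • v → 0 < μ.re) ∧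
  (∀ (μ : ℂ) (v : Fin N → ℂ), v ∈ LinearMap.ker p → v ≠ 0 → f v = μ • v → μ.re < 0)

variable {p f : Module.End ℂ (Fin N → ℂ)}

lemma mem_range_iff (hp : p * p = p) {x : Fin N → ℂ} :
    x ∈ LinearMap.range p ↔ p x = x := by
  constructor
  · rintro ⟨y, rfl⟩
    calc p (p y) = (p * p) y := (Module.End.mul_apply p p y).symm
    _ = p y := by rw [hp]
  · intro h
    exact ⟨x, h⟩

lemma sub_proj_mem_ker (hp : p * p = p) (v : Fin N → ℂ) :
    v - p v ∈ LinearMap.ker p := by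
  have : p (p v) = p v := by
    calc p (p v) = (p * p) v := rfl
    _ = p v := by rw [hp]
  simp [LinearMap.mem_ker, map_sub, this]

/-- invariance of both `range p` and `ker p` implies `p` commutes with `f`. -/
lemma comm_of_inv (hp : p * p = p)
    (h1 : ∀ x ∈ LinearMap.range p, f x ∈ LinearMap.range p)
    (h2 : ∀ x ∈ LinearMap.ker p, f x ∈ LinearMap.ker p) :
    p * f = f * p := by
  apply LinearMap.ext
  intro v
  have hu : p (f (p v)) = f (p v) :=
    (mem_range_iff hp).1 (h1 _ ⟨v, rfl⟩)
  have hw : p (f (v - p v)) = 0 := h2 _ (sub_proj_mem_ker hp v)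
  have : f v = f (p v) + f (v - p v) := by rw [← map_add]; ring_nf
  calc (p * f) v = p (f v) := rfl
  _ = p (f (p v)) + p (f (v - p v)) := by rw [this, map_add]
  _ = f (p v) := by rw [hu, hw, add_zero]
  _ = (f * p) v := rfl

lemma maxGen_decomp (hp : p * p = p) (hcomm : p * f = f * p) {μ : ℂ} {v : Fin N → ℂ}
    (hv : v ∈ Module.End.maxGenEigenspace f μ) :
    p v ∈ Module.End.maxGenEigenspace f μ ∧
      v - p v ∈ Module.End.maxGenEigenspace f μ := by
  obtain ⟨k, hk⟩ := (Module.End.mem_maxGenEigenspace f μ v).1 hv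
  have h1 : Commute p f := hcomm
  have h2 : Commute p (μ • (1 : Module.End ℂ (Fin N → ℂ))) :=
    (Commute.one_right p).smul_right μ
  have h3 : Commute p ((f - μ • 1) ^ k) := (h1.sub_right h2).pow_right k
  have hkp : ((f - μ • 1) ^ k) (p v) = 0 := by
    calc ((f - μ • 1) ^ k) (p v) = (((f - μ • 1) ^ k) * p) v := rfl
    _ = (p * ((f - μ • 1) ^ k)) v := by rw [h3.eq]
    _ = p (((f - μ • 1) ^ k) v) := rfl
    _ = 0 := by rw [hk, map_zero]
  refine ⟨(Module.End.mem_maxGenEigenspace f μ _).2 ⟨k, hkp⟩,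
    (Module.End.mem_maxGenEigenspace f μ _).2 ⟨k, ?_⟩⟩
  rw [map_sub, hk, hkp, sub_zero]

/-- A nonzero maximal generalized eigenspace of a restriction yields an eigenvector
inside the invariant subspace. -/
lemma exists_eigvec {W : Submodule ℂ (Fin N → ℂ)} (hf : ∀ x ∈ W, f x ∈ W) {μ : ℂ}
    (h : Module.End.maxGenEigenspace (f.restrict hf) μ ≠ ⊥) :
    ∃ v ∈ W, v ≠ 0 ∧ f v = μ • v := by
  have h1 : Module.End.HasUnifEigenvalue (f.restrict hf) μ ⊤ := h
  have h2 : Module.End.HasUnifEigenvalue (f.restrict hf) μ 1 :=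
    h1.lt (by norm_num)
  obtain ⟨x, hx⟩ := h2.exists_hasUnifEigenvector
  refine ⟨x.1, x.2, ?_, ?_⟩
  · intro h0
    exact hx.2 (Submodule.coe_eq_zero.1 h0)
  · have := hx.apply_eq_smul
    have h3 := congrArg Subtype.val this
    simpa [LinearMap.restrict_apply] using h3

lemma maxGen_le_range (hp : p * p = p) (hg : Good p f) {μ : ℂ} (hμ : 0 < μ.re) :
    Module.End.maxGenEigenspace f μ ≤ LinearMap.range p := by
  obtain ⟨hi1, hi2, he1, he2⟩ := hg
  intro v hv
  have hcomm := comm_of_inv hp hi1 hi2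
  obtain ⟨-, hw⟩ := maxGen_decomp hp hcomm hv
  have hwker : v - p v ∈ LinearMap.ker p := sub_proj_mem_ker hp v
  have hw0 : v - p v = 0 := by
    by_contra hne
    have heq : Module.End.maxGenEigenspace (f.restrict hi2) μ
        = Submodule.comap (LinearMap.ker p).subtype (Module.End.maxGenEigenspace f μ) :=
      Module.End.genEigenspace_restrict f _ ⊤ μ hi2
    have hmem : (⟨v - p v, hwker⟩ : LinearMap.ker p) ∈
        Module.End.maxGenEigenspace (f.restrict hi2) μ := by
      rw [heq]; exact hw
    have hbot : Module.End.maxGenEigenspace (f.restrict hi2) μ ≠ ⊥ :=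
      (Submodule.ne_bot_iff _).2 ⟨⟨v - p v, hwker⟩, hmem, fun h => hne (by simpa using congrArg Subtype.val h)⟩
    obtain ⟨u, hu1, hu2, hu3⟩ := exists_eigvec hi2 hbot
    exact absurd (he2 μ u hu1 hu2 hu3) (by linarith)
  have : v = p v := by rwa [sub_eq_zero] at hw0
  exact ⟨v, this.symm⟩

lemma maxGen_le_ker (hp : p * p = p) (hg : Good p f) {μ : ℂ} (hμ : μ.re < 0) :
    Module.End.maxGenEigenspace f μ ≤ LinearMap.ker p := by
  obtain ⟨hi1, hi2, he1, he2⟩ := hg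
  intro v hv
  have hcomm := comm_of_inv hp hi1 hi2
  obtain ⟨hu, hw⟩ := maxGen_decomp hp hcomm hv
  have hu0 : p v = 0 := by
    by_contra hne
    have heq : Module.End.maxGenEigenspace (f.restrict hi1) μ
        = Submodule.comap (LinearMap.range p).subtype (Module.End.maxGenEigenspace f μ) :=
      Module.End.genEigenspace_restrict f _ ⊤ μ hi1
    have hmem : (⟨p v, ⟨v, rfl⟩⟩ : LinearMap.range p) ∈
        Module.End.maxGenEigenspace (f.restrict hi1) μ := by
      rw [heq]; exact hu
    have hbot : Module.End.maxGenEigenspace (f.restrict hi1) μ ≠ ⊥ :=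
      (Submodule.ne_bot_iff _).2 ⟨⟨p v, ⟨v, rfl⟩⟩, hmem, fun h => hne (by simpa using congrArg Subtype.val h)⟩
    obtain ⟨u, hu1, hu2, hu3⟩ := exists_eigvec hi1 hbot
    exact absurd (he1 μ u hu1 hu2 hu3) (by linarith)
  exact LinearMap.mem_ker.2 hu0

lemma range_le_biSup (hp : p * p = p) (hg : Good p f) :
    LinearMap.range p ≤ ⨆ μ ∈ {μ : ℂ | 0 < μ.re}, Module.End.maxGenEigenspace f μ := by
  obtain ⟨hi1, hi2, he1, he2⟩ := hg
  set g := f.restrict hi1 with hgdef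
  have htop : ⨆ μ : ℂ, Module.End.maxGenEigenspace g μ = ⊤ :=
    Module.End.iSup_maxGenEigenspace_eq_top g
  have : LinearMap.range p =
      Submodule.map (LinearMap.range p).subtype (⨆ μ : ℂ, Module.End.maxGenEigenspace g μ) := by
    rw [htop, Submodule.map_subtype_top]
  rw [this, Submodule.map_iSup]
  apply iSup_le
  intro μ
  by_cases hb : Module.End.maxGenEigenspace g μ = ⊥
  · rw [hb, Submodule.map_bot]; exact bot_le
  · obtain ⟨u, hu1, hu2, hu3⟩ := exists_eigvec hi1 hb
    have hμ : 0 < μ.re := he1 μ u hu1 hu2 hu3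
    have heq : Module.End.maxGenEigenspace g μ
        = Submodule.comap (LinearMap.range p).subtype (Module.End.maxGenEigenspace f μ) :=
      Module.End.genEigenspace_restrict f _ ⊤ μ hi1
    have hle : Submodule.map (LinearMap.range p).subtype (Module.End.maxGenEigenspace g μ)
        ≤ Module.End.maxGenEigenspace f μ := by
      rw [heq]
      exact Submodule.map_comap_le _ _
    exact hle.trans (le_biSup _ hμ)

lemma ker_le_biSup (hp : p * p = p) (hg : Good p f) :
    LinearMap.ker p ≤ ⨆ μ ∈ {μ : ℂ | μ.re < 0}, Module.End.maxGenEigenspace f μ := by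
  obtain ⟨hi1, hi2, he1, he2⟩ := hg
  set g := f.restrict hi2 with hgdef
  have htop : ⨆ μ : ℂ, Module.End.maxGenEigenspace g μ = ⊤ :=
    Module.End.iSup_maxGenEigenspace_eq_top g
  have : LinearMap.ker p =
      Submodule.map (LinearMap.ker p).subtype (⨆ μ : ℂ, Module.End.maxGenEigenspace g μ) := by
    rw [htop, Submodule.map_subtype_top]
  rw [this, Submodule.map_iSup]
  apply iSup_le
  intro μ
  by_cases hb : Module.End.maxGenEigenspace g μ = ⊥
  · rw [hb, Submodule.map_bot]; exact bot_le
  · obtain ⟨u, hu1, hu2, hu3⟩ := exists_eigvec hi2 hb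
    have hμ : μ.re < 0 := he2 μ u hu1 hu2 hu3
    have heq : Module.End.maxGenEigenspace g μ
        = Submodule.comap (LinearMap.ker p).subtype (Module.End.maxGenEigenspace f μ) :=
      Module.End.genEigenspace_restrict f _ ⊤ μ hi2
    have hle : Submodule.map (LinearMap.ker p).subtype (Module.End.maxGenEigenspace g μ)
        ≤ Module.End.maxGenEigenspace f μ := by
      rw [heq]
      exact Submodule.map_comap_le _ _
    exact hle.trans (le_biSup _ hμ)

lemma spectrum_matrix_eq (a : Matrix (Fin N) (Fin N) ℂ) :
    spectrum ℂ a = spectrum ℂ (Matrix.toLin' a) := by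
  have h : Matrix.toLinAlgEquiv' a = Matrix.toLin' a := by
    ext v
    simp [Matrix.toLinAlgEquiv'_apply, Matrix.toLin'_apply]
  rw [← h]
  exact (AlgEquiv.spectrum_eq Matrix.toLinAlgEquiv' a).symm

lemma mem_of_good {P₀ a : Matrix (Fin N) (Fin N) ℂ}
    (hp : Matrix.toLin' P₀ * Matrix.toLin' P₀ = Matrix.toLin' P₀)
    (hg : Good (Matrix.toLin' P₀) (Matrix.toLin' a)) : a ∈ projFiber N P₀ := by
  set p := Matrix.toLin' P₀
  set f := Matrix.toLin' a
  obtain ⟨hi1, hi2, he1, he2⟩ := hg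
  have hcomm := comm_of_inv hp hi1 hi2
  refine ⟨?_, ?_, ?_⟩
  · intro μ hμ
    rw [spectrum_matrix_eq] at hμ
    have hev : Module.End.HasEigenvalue f μ :=
      Module.End.hasEigenvalue_iff_mem_spectrum.2 hμ
    obtain ⟨v, hv⟩ := hev.exists_hasEigenvector
    have hfv : f v = μ • v := hv.apply_eq_smul
    have hv0 : v ≠ 0 := hv.2
    have hpu : f (p v) = μ • (p v) := by
      calc f (p v) = (f * p) v := rfl
      _ = (p * f) v := by rw [hcomm]
      _ = p (f v) := rfl
      _ = μ • (p v) := by rw [hfv, map_smul]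
    have hpw : f (v - p v) = μ • (v - p v) := by
      rw [map_sub, hfv, hpu, smul_sub]
    by_cases h0 : p v = 0
    · have hw0 : v - p v ≠ 0 := by rwa [h0, sub_zero]
      have := he2 μ (v - p v) (sub_proj_mem_ker hp v) hw0 hpw
      linarith
    · have := he1 μ (p v) ⟨v, rfl⟩ h0 hpu
      linarith
  · refine le_antisymm ?_ (range_le_biSup hp ⟨hi1, hi2, he1, he2⟩)
    exact iSup₂_le fun μ hμ => maxGen_le_range hp ⟨hi1, hi2, he1, he2⟩ hμ
  · refine le_antisymm ?_ (ker_le_biSup hp ⟨hi1, hi2, he1, he2⟩)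
    exact iSup₂_le fun μ hμ => maxGen_le_ker hp ⟨hi1, hi2, he1, he2⟩ hμ

lemma good_of_mem {P₀ a : Matrix (Fin N) (Fin N) ℂ}
    (ha : a ∈ projFiber N P₀) : Good (Matrix.toLin' P₀) (Matrix.toLin' a) := by
  obtain ⟨hspec, hplus, hminus⟩ := ha
  have hmapsTo : ∀ (S : Set ℂ), ∀ x ∈ (⨆ μ ∈ S, Module.End.maxGenEigenspace (Matrix.toLin' a) μ),
      Matrix.toLin' a x ∈ (⨆ μ ∈ S, Module.End.maxGenEigenspace (Matrix.toLin' a) μ) := by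
    intro S x hx
    have hle : Submodule.map (Matrix.toLin' a)
        (⨆ μ ∈ S, Module.End.maxGenEigenspace (Matrix.toLin' a) μ) ≤
        ⨆ μ ∈ S, Module.End.maxGenEigenspace (Matrix.toLin' a) μ := by
      simp only [Submodule.map_iSup]
      refine iSup₂_le fun μ hμ => ?_
      refine le_trans ?_ (le_biSup _ hμ)
      rintro y ⟨z, hz, rfl⟩
      exact Module.End.mapsTo_maxGenEigenspace_of_comm (Commute.refl (Matrix.toLin' a)) μ hz
    exact hle ⟨x, hx, rfl⟩
  have heig : ∀ (S : Set ℂ) (μ : ℂ) (v : Fin N → ℂ), μ ∉ S →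
      v ∈ (⨆ ν ∈ S, Module.End.maxGenEigenspace (Matrix.toLin' a) ν) → v ≠ 0 →
      Matrix.toLin' a v = μ • v → False := by
    intro S μ v hμS hvS hv0 hfv
    have hvmax : v ∈ Module.End.maxGenEigenspace (Matrix.toLin' a) μ := by
      rw [Module.End.mem_maxGenEigenspace]
      exact ⟨1, by simp [pow_one, LinearMap.sub_apply, hfv]⟩
    have hd := (Module.End.independent_maxGenEigenspace (Matrix.toLin' a)).disjoint_biSup hμS
    have hb : v ∈ (⊥ : Submodule ℂ (Fin N → ℂ)) :=
      hd.le_bot (Submodule.mem_inf.2 ⟨hvmax, hvS⟩)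
    exact hv0 ((Submodule.mem_bot ℂ).1 hb)
  refine ⟨?_, ?_, ?_, ?_⟩
  · intro x hx; rw [← hplus] at hx ⊢; exact hmapsTo _ x hx
  · intro x hx; rw [← hminus] at hx ⊢; exact hmapsTo _ x hx
  · intro μ v hv hv0 hfv
    by_contra h0
    rw [← hplus] at hv
    exact heig _ μ v (by simpa using h0) hv hv0 hfv
  · intro μ v hv hv0 hfv
    by_contra h0
    rw [← hminus] at hv
    exact heig _ μ v (by simpa using h0) hv hv0 hfv

lemma real_smul_matrix (r : ℝ) (A : Matrix (Fin N) (Fin N) ℂ) :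
    r • A = (r : ℂ) • A := by
  ext i j
  simp [Matrix.smul_apply, Complex.real_smul]

/-- `2 P₀ - 1` acts as the identity on `range p`. -/
lemma base_on_range {p : Module.End ℂ (Fin N → ℂ)} (hp : p * p = p) {x : Fin N → ℂ}
    (hx : x ∈ LinearMap.range p) :
    ((2 : ℂ) • p - 1) x = x := by
  have h := (mem_range_iff hp).1 hx
  simp [LinearMap.sub_apply, LinearMap.smul_apply, h, two_smul]

lemma base_on_ker {p : Module.End ℂ (Fin N → ℂ)} {x : Fin N → ℂ}
    (hx : x ∈ LinearMap.ker p) :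
    ((2 : ℂ) • p - 1) x = -x := by
  have h := LinearMap.mem_ker.1 hx
  simp [LinearMap.sub_apply, LinearMap.smul_apply, h]

lemma good_combo {p f : Module.End ℂ (Fin N → ℂ)} (hp : p * p = p) (hg : Good p f)
    {s t : ℝ} (hs : 0 ≤ s) (ht : 0 ≤ t) (hst : s + t = 1) :
    Good p ((s : ℂ) • ((2 : ℂ) • p - 1) + (t : ℂ) • f) := by
  obtain ⟨hi1, hi2, he1, he2⟩ := hg
  refine ⟨?_, ?_, ?_, ?_⟩
  · intro x hx
    have hx' : ((s : ℂ) • ((2 : ℂ) • p - 1) + (t : ℂ) • f) x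
        = (s : ℂ) • x + (t : ℂ) • f x := by
      simp only [LinearMap.add_apply, LinearMap.smul_apply, base_on_range hp hx]
    rw [hx']
    exact Submodule.add_mem _ (Submodule.smul_mem _ _ hx) (Submodule.smul_mem _ _ (hi1 x hx))
  · intro x hx
    have hx' : ((s : ℂ) • ((2 : ℂ) • p - 1) + (t : ℂ) • f) x
        = (s : ℂ) • (-x) + (t : ℂ) • f x := by
      simp only [LinearMap.add_apply, LinearMap.smul_apply, base_on_ker hx]
    rw [hx']
    exact Submodule.add_mem _ (Submodule.smul_mem _ _ (Submodule.neg_mem _ hx))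
      (Submodule.smul_mem _ _ (hi2 x hx))
  · intro μ v hv hv0 hfv
    have hev : (s : ℂ) • v + (t : ℂ) • f v = μ • v := by
      rw [← hfv]
      simp only [LinearMap.add_apply, LinearMap.smul_apply, base_on_range hp hv]
    have hkey : (t : ℂ) • f v = (μ - (s : ℂ)) • v := by
      rw [sub_smul, ← hev]
      abel
    by_cases ht0 : t = 0
    · have hs1 : s = 1 := by linarith
      subst ht0
      subst hs1
      have h0 : (μ - 1) • v = 0 := by
        have h1 := hkey.symm
        push_cast at h1
        simpa using h1
      have hμ : μ = 1 := sub_eq_zero.1 ((smul_eq_zero.1 h0).resolve_right hv0)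
      norm_num [hμ]
    · have htpos : 0 < t := lt_of_le_of_ne ht (Ne.symm ht0)
      have htC : (t : ℂ) ≠ 0 := by exact_mod_cast ht0
      have hfv' : f v = ((μ - (s : ℂ)) / (t : ℂ)) • v := by
        have h1 : ((t : ℂ)⁻¹ * (t : ℂ)) • f v = ((t : ℂ)⁻¹ * (μ - (s : ℂ))) • v := by
          rw [mul_smul, hkey, mul_smul]
        rw [inv_mul_cancel₀ htC, one_smul] at h1
        rw [h1, div_eq_inv_mul]
      have hre := he1 _ v hv hv0 hfv'
      have hre' : 0 < (μ.re - s) / t := by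
        have h2 : ((μ - (s : ℂ)) / (t : ℂ)).re = (μ.re - s) / t := by
          rw [Complex.div_ofReal_re]
          simp
        rwa [h2] at hre
      have h3 : 0 < μ.re - s := by
        have h2 := mul_pos hre' htpos
        rwa [div_mul_cancel₀ _ (ne_of_gt htpos)] at h2
      linarith
  · intro μ v hv hv0 hfv
    have hev : (s : ℂ) • (-v) + (t : ℂ) • f v = μ • v := by
      rw [← hfv]
      simp only [LinearMap.add_apply, LinearMap.smul_apply, base_on_ker hv]
    have hkey : (t : ℂ) • f v = (μ + (s : ℂ)) • v := by
      rw [add_smul, ← hev, smul_neg]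
      abel
    by_cases ht0 : t = 0
    · have hs1 : s = 1 := by linarith
      subst ht0
      subst hs1
      have h0 : (μ + 1) • v = 0 := by
        have h1 := hkey.symm
        push_cast at h1
        simpa using h1
      have hμ : μ = -1 := eq_neg_of_add_eq_zero_left
        ((smul_eq_zero.1 h0).resolve_right hv0)
      norm_num [hμ]
    · have htpos : 0 < t := lt_of_le_of_ne ht (Ne.symm ht0)
      have htC : (t : ℂ) ≠ 0 := by exact_mod_cast ht0
      have hfv' : f v = ((μ + (s : ℂ)) / (t : ℂ)) • v := by
        have h1 : ((t : ℂ)⁻¹ * (t : ℂ)) • f v = ((t : ℂ)⁻¹ * (μ + (s : ℂ))) • v := by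
          rw [mul_smul, hkey, mul_smul]
        rw [inv_mul_cancel₀ htC, one_smul] at h1
        rw [h1, div_eq_inv_mul]
      have hre := he2 _ v hv hv0 hfv'
      have hre' : (μ.re + s) / t < 0 := by
        have h2 : ((μ + (s : ℂ)) / (t : ℂ)).re = (μ.re + s) / t := by
          rw [Complex.div_ofReal_re]
          simp
        rwa [h2] at hre
      have h3 : μ.re + s < 0 := by
        have h2 := mul_neg_of_neg_of_pos hre' htpos
        rwa [div_mul_cancel₀ _ (ne_of_gt htpos)] at h2
      linarith

end ProjFiberAux

theorem projFiber_nonempty_contractible (N : ℕ) (hN : 1 ≤ N)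
    (P₀ : Matrix (Fin N) (Fin N) ℂ) (hP₀ : P₀ * P₀ = P₀) :
    (projFiber N P₀).Nonempty ∧ ContractibleSpace ↥(projFiber N P₀) := by
  classical
  set p : Module.End ℂ (Fin N → ℂ) := Matrix.toLin' P₀ with hpdef
  have hp : p * p = p := by
    rw [hpdef, Module.End.mul_eq_comp, ← Matrix.toLin'_mul, hP₀]
  set A₀ : Matrix (Fin N) (Fin N) ℂ := (2 : ℂ) • P₀ - 1 with hA₀def
  have hA₀lin : Matrix.toLin' A₀ = (2 : ℂ) • p - 1 := by
    rw [hA₀def]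
    simp [map_sub, map_smul, Matrix.toLin'_one, Module.End.one_eq_id, hpdef]
  have hgood₀ : ProjFiberAux.Good p (Matrix.toLin' A₀) := by
    rw [hA₀lin]
    refine ⟨?_, ?_, ?_, ?_⟩
    · intro x hx; rw [ProjFiberAux.base_on_range hp hx]; exact hx
    · intro x hx; rw [ProjFiberAux.base_on_ker hx]; exact Submodule.neg_mem _ hx
    · intro μ v hv hv0 hfv
      rw [ProjFiberAux.base_on_range hp hv] at hfv
      have h0 : (μ - 1) • v = 0 := by
        rw [sub_smul, one_smul, ← hfv, sub_self]
      have hμ : μ = 1 := sub_eq_zero.1 ((smul_eq_zero.1 h0).resolve_right hv0)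
      norm_num [hμ]
    · intro μ v hv hv0 hfv
      rw [ProjFiberAux.base_on_ker hv] at hfv
      have h0 : (μ + 1) • v = 0 := by
        rw [add_smul, one_smul, ← hfv]
        abel
      have hμ : μ = -1 := eq_neg_of_add_eq_zero_left
        ((smul_eq_zero.1 h0).resolve_right hv0)
      norm_num [hμ]
  have hA₀mem : A₀ ∈ projFiber N P₀ := ProjFiberAux.mem_of_good hp hgood₀
  have hstar : StarConvex ℝ A₀ (projFiber N P₀) := by
    intro a ha s t hs ht hst
    have hga := ProjFiberAux.good_of_mem ha
    have hlin : Matrix.toLin' (s • A₀ + t • a)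
        = (s : ℂ) • ((2 : ℂ) • p - 1) + (t : ℂ) • Matrix.toLin' a := by
      rw [ProjFiberAux.real_smul_matrix s A₀, ProjFiberAux.real_smul_matrix t a]
      rw [map_add, map_smul, map_smul, hA₀lin]
    refine ProjFiberAux.mem_of_good hp ?_
    rw [hlin]
    exact ProjFiberAux.good_combo hp hga hs ht hst
  exact ⟨⟨A₀, hA₀mem⟩, hstar.contractibleSpace ⟨A₀, hA₀mem⟩⟩
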